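/- The induced Koszul differential δ_W on W(E) ⊗ ∧E* maps the left ideal I = I_L ⊗ ∧E* + W(E) ⊗ I_∧ into itself. -/

import Mathlib

/-!
Context: `A` a commutative ring, `lam ∈ A`, `E` a finitely generated projective
`A`-module, `ω` a nondegenerate alternating bilinear form (`u x = ω x` bijective),
`E = L ⊕ L'` with `L, L'` isotropic.  `W(E)` is the `RingQuot` Weyl algebra with
projection `μ_W`; `I_L ⊆ W(E)` is the left ideal generated by `μ_W(L)`; `∧E*` is the
exterior algebra of `E*`, `I_∧ = ⊕_{n≥1} I_∧ⁿ` (via the evaluation pairing `Pev`).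
The Koszul differential `δ` on `T(E) ⊗ ∧E*` is given as data (hypothesis `hδ`), and
`δ_W` is the induced map on `W(E) ⊗ ∧E*` (hypothesis `hδW`).
-/

open scoped TensorProduct

set_option synthInstance.maxHeartbeats 1000000
set_option maxHeartbeats 1000000

/-- The defining relation of the Weyl algebra `W(E)`. -/
def weylRel (A : Type*) [CommRing A] {E : Type*} [AddCommGroup E] [Module A E]
    (lam : A) (ω : E →ₗ[A] E →ₗ[A] A) :
    TensorAlgebra A E → TensorAlgebra A E → Prop := fun a b =>
  ∃ x y : E, a = TensorAlgebra.ι A x * TensorAlgebra.ι A y ∧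
    b = TensorAlgebra.ι A y * TensorAlgebra.ι A x +
      algebraMap A (TensorAlgebra A E) (lam * ω x y)

/-- The `n`-th exterior power `∧ⁿE*`, as a submodule of the exterior algebra. -/
def wedgePow (A : Type*) [CommRing A] (E : Type*) [AddCommGroup E] [Module A E]
    (n : ℕ) : Submodule A (ExteriorAlgebra A (Module.Dual A E)) :=
  (LinearMap.range (ExteriorAlgebra.ι A :
    Module.Dual A E →ₗ[A] ExteriorAlgebra A (Module.Dual A E))) ^ n

/-- `I_∧ⁿ`: the elements of `∧ⁿE*` annihilating all `n`-tuples of elements of `L`. -/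
def IwedgeN {A : Type*} [CommRing A] {E : Type*} [AddCommGroup E] [Module A E]
    (L : Submodule A E)
    (Pev : (n : ℕ) → ExteriorAlgebra A (Module.Dual A E) →ₗ[A] ((Fin n → E) → A))
    (n : ℕ) : Submodule A (ExteriorAlgebra A (Module.Dual A E)) :=
  wedgePow A E n ⊓
    ⨅ (x : Fin n → E) (_ : ∀ i, x i ∈ L), LinearMap.ker ((LinearMap.proj x).comp (Pev n))

/-- `I_∧ = ⊕_{n≥1} I_∧ⁿ`, as a submodule of `∧E*`. -/
def Iwedge {A : Type*} [CommRing A] {E : Type*} [AddCommGroup E] [Module A E]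
    (L : Submodule A E)
    (Pev : (n : ℕ) → ExteriorAlgebra A (Module.Dual A E) →ₗ[A] ((Fin n → E) → A)) :
    Submodule A (ExteriorAlgebra A (Module.Dual A E)) :=
  ⨆ n : ℕ, IwedgeN L Pev (n + 1)

section Aux
variable {A : Type*} [CommRing A] {E : Type*} [AddCommGroup E] [Module A E]

lemma aux_tspan (t : TensorAlgebra A E) :
    t ∈ Submodule.span A
      {t : TensorAlgebra A E | ∃ xs : List E, (xs.map (TensorAlgebra.ι A)).prod = t} := by
  induction t using TensorAlgebra.induction with
  | algebraMap r =>
      rw [Algebra.algebraMap_eq_smul_one]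
      exact Submodule.smul_mem _ r (Submodule.subset_span ⟨[], by simp⟩)
  | ι x => exact Submodule.subset_span ⟨[x], by simp⟩
  | mul a b ha hb =>
      have h : Submodule.span A {t : TensorAlgebra A E | ∃ xs : List E,
            (xs.map (TensorAlgebra.ι A)).prod = t} *
          Submodule.span A {t : TensorAlgebra A E | ∃ xs : List E,
            (xs.map (TensorAlgebra.ι A)).prod = t} ≤
          Submodule.span A {t : TensorAlgebra A E | ∃ xs : List E,
            (xs.map (TensorAlgebra.ι A)).prod = t} := by
        rw [Submodule.span_mul_span]
        refine Submodule.span_le.2 ?_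
        intro z hz
        rw [Set.mem_mul] at hz
        obtain ⟨u, ⟨xs, rfl⟩, v, ⟨ys, rfl⟩, rfl⟩ := hz
        exact Submodule.subset_span ⟨xs ++ ys, by rw [List.map_append, List.prod_append]⟩
      exact h (Submodule.mul_mem_mul ha hb)
  | add a b ha hb => exact Submodule.add_mem _ ha hb

lemma aux_wspan (lam : A) (ω : E →ₗ[A] E →ₗ[A] A) (w : RingQuot (weylRel A lam ω)) :
    w ∈ Submodule.span A {w : RingQuot (weylRel A lam ω) | ∃ xs : List E,
      RingQuot.mkAlgHom A (weylRel A lam ω) ((xs.map (TensorAlgebra.ι A)).prod) = w} := by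
  obtain ⟨t, rfl⟩ := RingQuot.mkAlgHom_surjective A (weylRel A lam ω) w
  have h := Submodule.mem_map_of_mem
    (f := (RingQuot.mkAlgHom A (weylRel A lam ω)).toLinearMap) (aux_tspan t)
  rw [Submodule.map_span] at h
  refine Submodule.span_mono ?_ h
  rintro _ ⟨_, ⟨xs, rfl⟩, rfl⟩
  exact ⟨xs, rfl⟩

lemma aux_wedgePow_span (n : ℕ) :
    wedgePow A E n = Submodule.span A {a : ExteriorAlgebra A (Module.Dual A E) |
      ∃ ξs : Fin n → Module.Dual A E,
        (List.ofFn fun i => ExteriorAlgebra.ι A (ξs i)).prod = a} := by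
  induction n with
  | zero =>
      rw [wedgePow, pow_zero, Submodule.one_eq_span]
      congr 1
      ext a
      constructor
      · rintro rfl; exact ⟨Fin.elim0, by simp⟩
      · rintro ⟨ξs, rfl⟩; simp
  | succ n ih =>
      rw [wedgePow, pow_succ']
      refine le_antisymm ?_ ?_
      · refine Submodule.mul_le.2 fun x hx y hy => ?_
        obtain ⟨ξ, rfl⟩ := hx
        have hy' : y ∈ Submodule.span A {a : ExteriorAlgebra A (Module.Dual A E) |
            ∃ ξs : Fin n → Module.Dual A E,
              (List.ofFn fun i => ExteriorAlgebra.ι A (ξs i)).prod = a} := by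
          rw [← ih]; exact hy
        clear hy
        induction hy' using Submodule.span_induction with
        | mem a ha =>
            obtain ⟨ξs, rfl⟩ := ha
            exact Submodule.subset_span ⟨(Fin.cons ξ ξs : Fin (n+1) → Module.Dual A E),
              by simp [List.ofFn_succ]⟩
        | zero => rw [mul_zero]; exact zero_mem _
        | add a b _ _ iha ihb => rw [mul_add]; exact add_mem iha ihb
        | smul r a _ ih2 => rw [mul_smul_comm]; exact Submodule.smul_mem _ _ ih2
      · refine Submodule.span_le.2 ?_
        rintro _ ⟨ξs, rfl⟩
        rw [List.ofFn_succ, List.prod_cons]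
        refine Submodule.mul_mem_mul (LinearMap.mem_range_self _ _) ?_
        rw [show (LinearMap.range (ExteriorAlgebra.ι A : Module.Dual A E →ₗ[A]
            ExteriorAlgebra A (Module.Dual A E))) ^ n = wedgePow A E n from rfl, ih]
        exact Submodule.subset_span ⟨fun i => ξs i.succ, rfl⟩

lemma aux_cofactor
    (Pev : (n : ℕ) → ExteriorAlgebra A (Module.Dual A E) →ₗ[A] ((Fin n → E) → A))
    (hPev : ∀ (n : ℕ) (ξs : Fin n → Module.Dual A E) (x : Fin n → E),
      Pev n ((List.ofFn fun i => ExteriorAlgebra.ι A (ξs i)).prod) x =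
        Matrix.det (Matrix.of fun i j => ξs i (x j)))
    (n : ℕ) (ξ : Module.Dual A E) {η : ExteriorAlgebra A (Module.Dual A E)}
    (hη : η ∈ wedgePow A E n) (y : Fin (n+1) → E) :
    Pev (n+1) (ExteriorAlgebra.ι A ξ * η) y =
      ∑ j : Fin (n+1), (-1:A)^(j:ℕ) * ξ (y j) * Pev n η (y ∘ j.succAbove) := by
  rw [aux_wedgePow_span] at hη
  induction hη using Submodule.span_induction with
  | mem a ha =>
      obtain ⟨ξs, rfl⟩ := ha
      have h1 : ExteriorAlgebra.ι A ξ * (List.ofFn fun i => ExteriorAlgebra.ι A (ξs i)).prod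
          = (List.ofFn fun i : Fin (n+1) =>
              ExteriorAlgebra.ι A ((Fin.cons ξ ξs : Fin (n+1) → Module.Dual A E) i)).prod := by
        simp [List.ofFn_succ]
      rw [h1, hPev]
      simp only [hPev]
      rw [Matrix.det_succ_row_zero]
      refine Finset.sum_congr rfl fun j _ => ?_
      have e2 : ((Matrix.of fun i k =>
            (Fin.cons ξ ξs : Fin (n+1) → Module.Dual A E) i (y k)).submatrix Fin.succ j.succAbove)
          = Matrix.of fun i k => ξs i ((y ∘ j.succAbove) k) := by
        ext i k
        simp [Fin.cons_succ]
      rw [e2]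
      simp
  | zero => simp
  | add a b _ _ iha ihb =>
      simp only [mul_add, map_add, Pi.add_apply, iha, ihb, ← Finset.sum_add_distrib]
      try exact Finset.sum_congr rfl fun j _ => by ring
  | smul r a _ ih =>
      simp only [mul_smul_comm, map_smul, Pi.smul_apply, smul_eq_mul, ih, Finset.mul_sum]
      try exact Finset.sum_congr rfl fun j _ => by ring

lemma mem_IwedgeN_iff {L : Submodule A E}
    (Pev : (n : ℕ) → ExteriorAlgebra A (Module.Dual A E) →ₗ[A] ((Fin n → E) → A))
    (n : ℕ) (α : ExteriorAlgebra A (Module.Dual A E)) :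
    α ∈ IwedgeN L Pev n ↔ α ∈ wedgePow A E n ∧
      ∀ y : Fin n → E, (∀ i, y i ∈ L) → Pev n α y = 0 := by
  simp [IwedgeN, Submodule.mem_inf, Submodule.mem_iInf, LinearMap.mem_ker,
    LinearMap.comp_apply, LinearMap.proj_apply]

lemma aux_mulIwedge {L : Submodule A E}
    (Pev : (n : ℕ) → ExteriorAlgebra A (Module.Dual A E) →ₗ[A] ((Fin n → E) → A))
    (hPev : ∀ (n : ℕ) (ξs : Fin n → Module.Dual A E) (x : Fin n → E),
      Pev n ((List.ofFn fun i => ExteriorAlgebra.ι A (ξs i)).prod) x =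
        Matrix.det (Matrix.of fun i j => ξs i (x j)))
    (ξ : Module.Dual A E) {n : ℕ} {α : ExteriorAlgebra A (Module.Dual A E)}
    (hα : α ∈ wedgePow A E n)
    (hz : (∀ y : Fin n → E, (∀ i, y i ∈ L) → Pev n α y = 0) ∨ (∀ x ∈ L, ξ x = 0)) :
    ExteriorAlgebra.ι A ξ * α ∈ IwedgeN L Pev (n+1) := by
  rw [mem_IwedgeN_iff]
  refine ⟨?_, ?_⟩
  · rw [wedgePow, pow_succ']
    exact Submodule.mul_mem_mul (LinearMap.mem_range_self _ _) hα
  · intro y hy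
    rw [aux_cofactor Pev hPev n ξ hα y]
    refine Finset.sum_eq_zero fun j _ => ?_
    rcases hz with hz | hz
    · rw [hz (y ∘ j.succAbove) (fun i => hy _), mul_zero]
    · rw [hz _ (hy j), mul_zero, zero_mul]

lemma aux_A {L : Submodule A E}
    (Pev : (n : ℕ) → ExteriorAlgebra A (Module.Dual A E) →ₗ[A] ((Fin n → E) → A))
    (hPev : ∀ (n : ℕ) (ξs : Fin n → Module.Dual A E) (x : Fin n → E),
      Pev n ((List.ofFn fun i => ExteriorAlgebra.ι A (ξs i)).prod) x =
        Matrix.det (Matrix.of fun i j => ξs i (x j)))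
    (ξ : Module.Dual A E) (hξ : ∀ z ∈ L, ξ z = 0)
    (η : ExteriorAlgebra A (Module.Dual A E)) :
    ExteriorAlgebra.ι A ξ * η ∈ Iwedge L Pev := by
  refine DirectSum.Decomposition.inductionOn (fun n : ℕ => ⋀[A]^n (Module.Dual A E))
    (motive := fun η => ExteriorAlgebra.ι A ξ * η ∈ Iwedge L Pev) ?_ ?_ ?_ η
  · show ExteriorAlgebra.ι A ξ * 0 ∈ Iwedge L Pev
    rw [mul_zero]; exact zero_mem _
  · intro i m
    exact le_iSup (fun n => IwedgeN L Pev (n+1)) i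
      (aux_mulIwedge Pev hPev ξ m.2 (Or.inr hξ))
  · intro a b ha hb
    show ExteriorAlgebra.ι A ξ * (a + b) ∈ Iwedge L Pev
    rw [mul_add]; exact add_mem ha hb

lemma aux_B {L : Submodule A E}
    (Pev : (n : ℕ) → ExteriorAlgebra A (Module.Dual A E) →ₗ[A] ((Fin n → E) → A))
    (hPev : ∀ (n : ℕ) (ξs : Fin n → Module.Dual A E) (x : Fin n → E),
      Pev n ((List.ofFn fun i => ExteriorAlgebra.ι A (ξs i)).prod) x =
        Matrix.det (Matrix.of fun i j => ξs i (x j)))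
    (ξ : Module.Dual A E) {α : ExteriorAlgebra A (Module.Dual A E)}
    (hα : α ∈ Iwedge L Pev) :
    ExteriorAlgebra.ι A ξ * α ∈ Iwedge L Pev := by
  refine Submodule.iSup_induction (motive := fun α => ExteriorAlgebra.ι A ξ * α ∈ Iwedge L Pev)
    _ hα (fun n β hβ => ?_)
    (show ExteriorAlgebra.ι A ξ * 0 ∈ Iwedge L Pev by rw [mul_zero]; exact zero_mem _)
    (fun a b ha hb => show ExteriorAlgebra.ι A ξ * (a + b) ∈ Iwedge L Pev by
      rw [mul_add]; exact add_mem ha hb)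
  rw [mem_IwedgeN_iff] at hβ
  exact le_iSup (fun n => IwedgeN L Pev (n+1)) (n+1)
    (aux_mulIwedge Pev hPev ξ hβ.1 (Or.inl hβ.2))

end Aux

/-- The left ideal `I = I_L ⊗ ∧E* + W(E) ⊗ I_∧` of `W(E) ⊗ ∧E*`, as a submodule. -/
noncomputable def IWsub (A : Type*) [CommRing A] {E : Type*} [AddCommGroup E]
    [Module A E] (lam : A) (ω : E →ₗ[A] E →ₗ[A] A) (L : Submodule A E)
    (Pev : (n : ℕ) → ExteriorAlgebra A (Module.Dual A E) →ₗ[A] ((Fin n → E) → A)) :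
    Submodule A (RingQuot (weylRel A lam ω) ⊗[A] ExteriorAlgebra A (Module.Dual A E)) :=
  LinearMap.range (TensorProduct.map
      (((Ideal.span
          (⇑(RingQuot.mkAlgHom A (weylRel A lam ω)) ''
            (⇑(TensorAlgebra.ι A) '' (L : Set E)))).restrictScalars A).subtype)
      (LinearMap.id : ExteriorAlgebra A (Module.Dual A E) →ₗ[A]
        ExteriorAlgebra A (Module.Dual A E))) ⊔
  LinearMap.range (TensorProduct.map
      (LinearMap.id : RingQuot (weylRel A lam ω) →ₗ[A] RingQuot (weylRel A lam ω))
      (Iwedge L Pev).subtype)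

/-- The induced Koszul differential `δ_W` on `W(E) ⊗ ∧E*` maps the
left ideal `I = I_L ⊗ ∧E* + W(E) ⊗ I_∧` into itself. -/
theorem stmt14 (A : Type*) [CommRing A] (E : Type*) [AddCommGroup E] [Module A E]
    (hfin : Module.Finite A E) (hproj : Module.Projective A E)
    (lam : A) (ω : E →ₗ[A] E →ₗ[A] A) (halt : ∀ x : E, ω x x = 0)
    (hbij : Function.Bijective (fun x : E => (ω x : Module.Dual A E)))
    (L L' : Submodule A E) (hcompl : IsCompl L L')
    (hLiso : ∀ x ∈ L, ∀ y ∈ L, ω x y = 0)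
    (hL'iso : ∀ x ∈ L', ∀ y ∈ L', ω x y = 0)
    (Pev : (n : ℕ) → ExteriorAlgebra A (Module.Dual A E) →ₗ[A] ((Fin n → E) → A))
    (hPev : ∀ (n : ℕ) (ξs : Fin n → Module.Dual A E) (x : Fin n → E),
      Pev n ((List.ofFn fun i => ExteriorAlgebra.ι A (ξs i)).prod) x =
        Matrix.det (Matrix.of fun i j => ξs i (x j)))
    (δ : TensorAlgebra A E ⊗[A] ExteriorAlgebra A (Module.Dual A E) →ₗ[A]
      TensorAlgebra A E ⊗[A] ExteriorAlgebra A (Module.Dual A E))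
    (hδ : ∀ (xs : List E) (η : ExteriorAlgebra A (Module.Dual A E)),
      δ ((xs.map fun x => TensorAlgebra.ι A x).prod ⊗ₜ[A] η) =
        ∑ i : Fin xs.length,
          ((xs.eraseIdx (i : ℕ)).map fun x => TensorAlgebra.ι A x).prod ⊗ₜ[A]
            (ExteriorAlgebra.ι A (ω (xs.get i)) * η))
    (δW : RingQuot (weylRel A lam ω) ⊗[A] ExteriorAlgebra A (Module.Dual A E) →ₗ[A]
      RingQuot (weylRel A lam ω) ⊗[A] ExteriorAlgebra A (Module.Dual A E))
    (hδW : δW.comp (TensorProduct.map (RingQuot.mkAlgHom A (weylRel A lam ω)).toLinearMap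
        LinearMap.id) =
      (TensorProduct.map (RingQuot.mkAlgHom A (weylRel A lam ω)).toLinearMap
        LinearMap.id).comp δ) :
    ∀ a ∈ IWsub A lam ω L Pev, δW a ∈ IWsub A lam ω L Pev := by
  classical
  set μ := RingQuot.mkAlgHom A (weylRel A lam ω) with hμdef
  set π := TensorProduct.map μ.toLinearMap
    (LinearMap.id : ExteriorAlgebra A (Module.Dual A E) →ₗ[A]
      ExteriorAlgebra A (Module.Dual A E)) with hπdef
  have hππ : ∀ t, δW (π t) = π (δ t) := fun t => LinearMap.congr_fun hδW t
  -- the key computation of δW on generators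
  have key : ∀ (xs : List E) (η : ExteriorAlgebra A (Module.Dual A E)),
      δW (μ ((xs.map fun x => TensorAlgebra.ι A x).prod) ⊗ₜ[A] η) =
      ∑ i : Fin xs.length,
        μ (((xs.eraseIdx (i : ℕ)).map fun x => TensorAlgebra.ι A x).prod) ⊗ₜ[A]
          (ExteriorAlgebra.ι A (ω (xs.get i)) * η) := by
    intro xs η
    have h1 : μ ((xs.map fun x => TensorAlgebra.ι A x).prod) ⊗ₜ[A] η
        = π ((xs.map fun x => TensorAlgebra.ι A x).prod ⊗ₜ[A] η) := by
      rw [hπdef, TensorProduct.map_tmul]; rfl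
    rw [h1, hππ, hδ, map_sum]
    refine Finset.sum_congr rfl fun i _ => ?_
    rw [hπdef, TensorProduct.map_tmul]; rfl
  -- membership helpers
  have memL : ∀ (p : RingQuot (weylRel A lam ω)),
      p ∈ Ideal.span (⇑μ '' (⇑(TensorAlgebra.ι A) '' (L : Set E))) →
      ∀ η, p ⊗ₜ[A] η ∈ IWsub A lam ω L Pev := by
    intro p hp η
    refine Submodule.mem_sup_left ?_
    exact ⟨(⟨p, hp⟩ : (Ideal.span (⇑μ '' (⇑(TensorAlgebra.ι A) ''
      (L : Set E)))).restrictScalars A) ⊗ₜ[A] η, by rw [TensorProduct.map_tmul]; rfl⟩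
  have memR : ∀ (w : RingQuot (weylRel A lam ω)) (α : ExteriorAlgebra A (Module.Dual A E)),
      α ∈ Iwedge L Pev → w ⊗ₜ[A] α ∈ IWsub A lam ω L Pev := by
    intro w α hα
    refine Submodule.mem_sup_right ?_
    exact ⟨w ⊗ₜ[A] (⟨α, hα⟩ : Iwedge L Pev), by rw [TensorProduct.map_tmul]; rfl⟩
  -- the core computation for the left part
  have coreL : ∀ (xs : List E) (x : E), x ∈ L → ∀ η,
      δW (μ (((xs ++ [x]).map fun x => TensorAlgebra.ι A x).prod) ⊗ₜ[A] η) ∈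
        IWsub A lam ω L Pev := by
    intro xs x hx η
    rw [key]
    refine Submodule.sum_mem _ fun i _ => ?_
    have hil : (i : ℕ) < xs.length + 1 := by
      have := i.isLt; simpa using this
    by_cases h : (i : ℕ) < xs.length
    · have he : (xs ++ [x]).eraseIdx (i : ℕ) = xs.eraseIdx (i : ℕ) ++ [x] :=
        List.eraseIdx_append_of_lt_length h _
      have hg : (xs ++ [x]).get i = xs.get ⟨i, h⟩ := by
        simp only [List.get_eq_getElem]
        exact List.getElem_append_left h
      rw [he, hg]
      refine memL _ ?_ _
      rw [List.map_append, List.prod_append]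
      simp only [List.map_cons, List.map_nil, List.prod_cons, List.prod_nil, mul_one]
      rw [map_mul]
      exact Ideal.mul_mem_left _ _ (Ideal.subset_span
        (Set.mem_image_of_mem _ (Set.mem_image_of_mem _ hx)))
    · have hix : (i : ℕ) = xs.length := by omega
      have he : (xs ++ [x]).eraseIdx (i : ℕ) = xs := by
        rw [List.eraseIdx_append_of_length_le (by omega), hix]
        simp
      have hg : (xs ++ [x]).get i = x := by
        simp only [List.get_eq_getElem]
        rw [List.getElem_append_right (by omega)]
        simp [hix]
      rw [he, hg]
      exact memR _ _ (aux_A Pev hPev (ω x) (fun z hz => hLiso x hx z hz) η)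
  -- reduction of the ideal to spanning elements
  have hmulS₁ : ∀ (w q : RingQuot (weylRel A lam ω)),
      q ∈ Submodule.span A {p : RingQuot (weylRel A lam ω) | ∃ (xs : List E) (x : E),
        x ∈ L ∧ μ (((xs ++ [x]).map fun x => TensorAlgebra.ι A x).prod) = p} →
      w * q ∈ Submodule.span A {p : RingQuot (weylRel A lam ω) | ∃ (xs : List E) (x : E),
        x ∈ L ∧ μ (((xs ++ [x]).map fun x => TensorAlgebra.ι A x).prod) = p} := by
    intro w q hq
    have hW := aux_wspan lam ω w
    have hle : Submodule.span A {w : RingQuot (weylRel A lam ω) | ∃ xs : List E,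
          RingQuot.mkAlgHom A (weylRel A lam ω) ((xs.map (TensorAlgebra.ι A)).prod) = w} *
        Submodule.span A {p : RingQuot (weylRel A lam ω) | ∃ (xs : List E) (x : E),
          x ∈ L ∧ μ (((xs ++ [x]).map fun x => TensorAlgebra.ι A x).prod) = p} ≤
        Submodule.span A {p : RingQuot (weylRel A lam ω) | ∃ (xs : List E) (x : E),
          x ∈ L ∧ μ (((xs ++ [x]).map fun x => TensorAlgebra.ι A x).prod) = p} := by
      rw [Submodule.span_mul_span]
      refine Submodule.span_le.2 ?_
      intro z hz
      rw [Set.mem_mul] at hz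
      obtain ⟨u, ⟨ys, rfl⟩, v, ⟨xs, x, hx, rfl⟩, rfl⟩ := hz
      refine Submodule.subset_span ⟨ys ++ xs, x, hx, ?_⟩
      rw [← map_mul]
      congr 1
      rw [List.append_assoc, List.map_append, List.prod_append]
    exact hle (Submodule.mul_mem_mul hW hq)
  have spanL : ∀ p ∈ Ideal.span (⇑μ '' (⇑(TensorAlgebra.ι A) '' (L : Set E))),
      p ∈ Submodule.span A {p : RingQuot (weylRel A lam ω) | ∃ (xs : List E) (x : E),
        x ∈ L ∧ μ (((xs ++ [x]).map fun x => TensorAlgebra.ι A x).prod) = p} := by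
    intro p hp
    induction hp using Submodule.span_induction with
    | mem z hz =>
        obtain ⟨_, ⟨x, hx, rfl⟩, rfl⟩ := hz
        exact Submodule.subset_span ⟨[], x, hx, by simp⟩
    | zero => exact zero_mem _
    | add a b _ _ ha hb => exact add_mem ha hb
    | smul w q _ hq => rw [smul_eq_mul]; exact hmulS₁ w q hq
  have partL : ∀ p ∈ Ideal.span (⇑μ '' (⇑(TensorAlgebra.ι A) '' (L : Set E))),
      ∀ η, δW (p ⊗ₜ[A] η) ∈ IWsub A lam ω L Pev := by
    intro p hp η
    have hp' := spanL p hp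
    clear hp
    induction hp' using Submodule.span_induction with
    | mem z hz =>
        obtain ⟨xs, x, hx, rfl⟩ := hz
        exact coreL xs x hx η
    | zero => rw [TensorProduct.zero_tmul, map_zero]; exact zero_mem _
    | add a b _ _ ha hb => rw [TensorProduct.add_tmul, map_add]; exact add_mem ha hb
    | smul r q _ hq =>
        rw [← TensorProduct.smul_tmul', map_smul]
        exact Submodule.smul_mem _ r hq
  have partR : ∀ (w : RingQuot (weylRel A lam ω)) (α : ExteriorAlgebra A (Module.Dual A E)),
      α ∈ Iwedge L Pev → δW (w ⊗ₜ[A] α) ∈ IWsub A lam ω L Pev := by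
    intro w α hα
    have hw := aux_wspan lam ω w
    induction hw using Submodule.span_induction with
    | mem z hz =>
        obtain ⟨xs, rfl⟩ := hz
        rw [← hμdef, show (xs.map (TensorAlgebra.ι A)) =
          (xs.map fun x => TensorAlgebra.ι A x) from rfl, key]
        refine Submodule.sum_mem _ fun i _ => ?_
        exact memR _ _ (aux_B Pev hPev _ hα)
    | zero => rw [TensorProduct.zero_tmul, map_zero]; exact zero_mem _
    | add a b _ _ ha hb => rw [TensorProduct.add_tmul, map_add]; exact add_mem ha hb
    | smul r q _ hq =>
        rw [← TensorProduct.smul_tmul', map_smul]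
        exact Submodule.smul_mem _ r hq
  -- conclusion
  intro a ha
  obtain ⟨b, hb, c, hc, rfl⟩ := Submodule.mem_sup.1 ha
  clear ha
  rw [map_add]
  refine add_mem ?_ ?_
  · obtain ⟨t, rfl⟩ := hb
    induction t using TensorProduct.induction_on with
    | zero => rw [map_zero, map_zero]; exact zero_mem _
    | tmul p η =>
        rw [TensorProduct.map_tmul]
        exact partL (↑p) p.2 η
    | add s t hs ht => rw [map_add, map_add]; exact add_mem hs ht
  · obtain ⟨t, rfl⟩ := hc
    induction t using TensorProduct.induction_on with
    | zero => rw [map_zero, map_zero]; exact zero_mem _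
    | tmul w α =>
        rw [TensorProduct.map_tmul]
        exact partR w (↑α) α.2
    | add s t hs ht => rw [map_add, map_add]; exact add_mem hs ht
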